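/- arXiv:1511.06525 — 3 statements merged into one kernel-verified Lean document; each statement's English description precedes it below -/
import Mathlib

section
/- For every standard dose-escalation design ξ (t = n), λ_min(N_A(ξ)) ≤ 1/(4n), and λ_min(N_A(ξ)) = 1/(4n) holds if and only if ξ is the Senn design. Consequently, a standard design is E-optimal for comparing the drug doses with the placebo (i.e., maximizes λ_min(N_A(·)) among all standard dose-escalation designs) if and only if it is the Senn design. -/
noncomputable section

open Matrix Finset

/-- An approximate design on treatments 0,…,n and cohorts 1,…,t:
nonnegative weights summing to 1. -/
def isDesign (n t : ℕ) (ξ : Fin (n+1) → Fin t → ℝ) : Prop :=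
  (∀ i k, 0 ≤ ξ i k) ∧ ∑ i, ∑ k, ξ i k = 1

/-- A dose-escalation design: (i) in cohort k ≤ n only treatments 0,…,k are
allowed (cohort `k : Fin t` has cohort number k+1, treatment `i : Fin (n+1)`
has treatment number i); (ii) each cohort has proportion 1/t. -/
def isEscalation (n t : ℕ) (ξ : Fin (n+1) → Fin t → ℝ) : Prop :=
  isDesign n t ξ ∧
  (∀ (i : Fin (n+1)) (k : Fin t), k.val + 1 ≤ n → k.val + 1 < i.val → ξ i k = 0) ∧
  (∀ k : Fin t, ∑ i, ξ i k = 1 / t)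

/-- Treatment proportions r_i(ξ). -/
def repl (n t : ℕ) (ξ : Fin (n+1) → Fin t → ℝ) (i : Fin (n+1)) : ℝ := ∑ k, ξ i k

/-- The information matrix N_A(ξ) = diag(r_1,…,r_n) − t·Z Z^T for comparing
the doses with the placebo. -/
def NA (n t : ℕ) (ξ : Fin (n+1) → Fin t → ℝ) : Matrix (Fin n) (Fin n) ℝ :=
  fun i j => (if i = j then repl n t ξ i.succ else 0) -
    (t : ℝ) * ∑ k, ξ i.succ k * ξ j.succ k

/-- Smallest eigenvalue of a real symmetric matrix, via the Rayleigh quotient. -/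
def lambdaMin {m : ℕ} (A : Matrix (Fin m) (Fin m) ℝ) : ℝ :=
  sInf { r : ℝ | ∃ x : Fin m → ℝ, ∑ i, x i ^ 2 = 1 ∧ r = ∑ i, ∑ j, x i * A i j * x j }

/-- The Senn design (t = n): in each cohort half the weight on placebo and half
on the highest allowed dose. -/
def senn (n : ℕ) : Fin (n+1) → Fin n → ℝ :=
  fun i k => if i.val = 0 ∨ i.val = k.val + 1 then 1 / (2 * n) else 0

def G (n : ℕ) (ξ : Fin (n+1) → Fin n → ℝ) (c k : Fin n) : ℝ :=
  ∑ i ∈ Finset.univ.filter (fun i : Fin n => c ≤ i), ξ i.succ k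

lemma esc_zero {n : ℕ} {ξ : Fin (n+1) → Fin n → ℝ} (h : isEscalation n n ξ)
    {i k : Fin n} (hik : k.val < i.val) : ξ i.succ k = 0 :=
  h.2.1 i.succ k (by omega) (by simp [Fin.val_succ]; omega)

lemma G_zero {n : ℕ} {ξ : Fin (n+1) → Fin n → ℝ} (h : isEscalation n n ξ)
    {c k : Fin n} (hck : ¬ c ≤ k) : G n ξ c k = 0 := by
  apply Finset.sum_eq_zero
  intro i hi
  rw [Finset.mem_filter] at hi
  exact esc_zero h (by have := hi.2; rw [Fin.le_def] at this hck; omega)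

lemma card_filter_le {n : ℕ} (c : Fin n) :
    (Finset.univ.filter (fun i : Fin n => c ≤ i)).card = n - c.val := by
  rw [show Finset.univ.filter (fun i : Fin n => c ≤ i) = Finset.Ici c by ext i; simp]
  simp [Fin.card_Ici]

lemma rayleigh_test (n : ℕ) (hn : 0 < n) (ξ : Fin (n+1) → Fin n → ℝ)
    (hesc : isEscalation n n ξ) (c : Fin n) :
    ∃ x : Fin n → ℝ, (∑ i, x i ^ 2 = 1) ∧
      ∑ i, ∑ j, x i * NA n n ξ i j * x j
        = 1/(4*n) - ((n : ℝ) / ((n : ℝ) - c.val)) *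
            ∑ k ∈ Finset.univ.filter (fun k : Fin n => c ≤ k), (G n ξ c k - 1/(2*n))^2 := by
  have hn' : (n : ℝ) ≠ 0 := Nat.cast_ne_zero.mpr hn.ne'
  set F := Finset.univ.filter (fun i : Fin n => c ≤ i) with hF
  have hcard : F.card = n - c.val := card_filter_le c
  set q : ℝ := (n : ℝ) - c.val with hqdef
  have hq : 0 < q := by
    have h1 : (c.val : ℝ) < n := by exact_mod_cast c.isLt
    simp only [hqdef]; linarith
  have hqcast : ((n - c.val : ℕ) : ℝ) = q := by
    have := c.isLt.le
    push_cast [Nat.cast_sub this]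
    ring
  set x : Fin n → ℝ := fun i => if c ≤ i then (Real.sqrt q)⁻¹ else 0 with hx
  have hsq : (Real.sqrt q)⁻¹ ^ 2 = 1 / q := by
    rw [inv_pow, Real.sq_sqrt hq.le, one_div]
  have h0 : ∀ i : Fin n, x i ^ 2 = if c ≤ i then 1/q else 0 := by
    intro i; simp only [hx]; split <;> simp [hsq]
  have hnorm : ∑ i, x i ^ 2 = 1 := by
    rw [Finset.sum_congr rfl (fun i _ => h0 i), ← Finset.sum_filter, ← hF,
      Finset.sum_const, hcard, nsmul_eq_mul, hqcast]
    field_simp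
  refine ⟨x, hnorm, ?_⟩
  have hprod : ∀ k : Fin n, (∑ i, x i * ξ i.succ k)^2
      = ∑ i, ∑ j, x i * ξ i.succ k * (x j * ξ j.succ k) := fun k => by
    rw [sq, Finset.sum_mul_sum]
  have hsplit : ∑ i, ∑ j, x i * NA n n ξ i j * x j
      = (∑ i, x i ^ 2 * repl n n ξ i.succ)
        - (n : ℝ) * ∑ k, (∑ i, x i * ξ i.succ k) ^ 2 := by
    unfold NA
    have expand : ∀ i j : Fin n,
        x i * ((if i = j then repl n n ξ i.succ else 0)
          - (n : ℝ) * ∑ k, ξ i.succ k * ξ j.succ k) * x j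
        = (x i * (if i = j then repl n n ξ i.succ else 0)) * x j
          - ∑ k, (n : ℝ) * (x i * ξ i.succ k * (x j * ξ j.succ k)) := by
      intro i j
      have h2 : x i * ((n:ℝ) * ∑ k, ξ i.succ k * ξ j.succ k) * x j
          = ∑ k, (n : ℝ) * (x i * ξ i.succ k * (x j * ξ j.succ k)) := by
        rw [Finset.mul_sum, Finset.mul_sum, Finset.sum_mul]
        exact Finset.sum_congr rfl fun k _ => by ring
      rw [← h2]; ring
    simp only [expand]
    rw [Finset.sum_congr rfl (fun i (_ : i ∈ (univ : Finset (Fin n))) =>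
      Finset.sum_sub_distrib _ _), Finset.sum_sub_distrib]
    congr 1
    · apply Finset.sum_congr rfl
      intro i _
      rw [Finset.sum_eq_single i]
      · rw [if_pos rfl]; ring
      · intro j _ hj; simp [Ne.symm hj]
      · simp
    · simp only [hprod, Finset.mul_sum]
      calc ∑ i : Fin n, ∑ j : Fin n, ∑ k : Fin n,
              (n:ℝ) * (x i * ξ i.succ k * (x j * ξ j.succ k))
          = ∑ i : Fin n, ∑ k : Fin n, ∑ j : Fin n,
              (n:ℝ) * (x i * ξ i.succ k * (x j * ξ j.succ k)) :=
            Finset.sum_congr rfl fun i _ => Finset.sum_comm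
        _ = ∑ k : Fin n, ∑ i : Fin n, ∑ j : Fin n,
              (n:ℝ) * (x i * ξ i.succ k * (x j * ξ j.succ k)) := Finset.sum_comm
  rw [hsplit]
  have hdiag : ∑ i, x i ^ 2 * repl n n ξ i.succ = (1/q) * ∑ k, G n ξ c k := by
    have h1 : ∀ i : Fin n, x i ^ 2 * repl n n ξ i.succ
        = if c ≤ i then (1/q) * repl n n ξ i.succ else 0 := by
      intro i; rw [h0 i]; split <;> simp
    rw [Finset.sum_congr rfl (fun i _ => h1 i), ← Finset.sum_filter, ← hF]
    unfold repl G
    rw [← Finset.mul_sum, Finset.sum_comm]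
  have hxsum : ∀ k : Fin n, ∑ i, x i * ξ i.succ k = (Real.sqrt q)⁻¹ * G n ξ c k := by
    intro k
    have h1 : ∀ i : Fin n, x i * ξ i.succ k
        = if c ≤ i then (Real.sqrt q)⁻¹ * ξ i.succ k else 0 := by
      intro i; simp only [hx]; split <;> simp
    rw [Finset.sum_congr rfl (fun i _ => h1 i), ← Finset.sum_filter, ← hF,
      ← Finset.mul_sum]
    rfl
  have hB : (n : ℝ) * ∑ k, (∑ i, x i * ξ i.succ k) ^ 2
      = ((n:ℝ)/q) * ∑ k, (G n ξ c k)^2 := by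
    have h1 : ∀ k : Fin n, (∑ i, x i * ξ i.succ k)^2 = (1/q) * (G n ξ c k)^2 := by
      intro k; rw [hxsum k, mul_pow, hsq]
    rw [Finset.sum_congr rfl fun k _ => h1 k, ← Finset.mul_sum]
    ring
  rw [hdiag, hB]
  -- restrict sums to F
  have hG1 : ∑ k, G n ξ c k = ∑ k ∈ F, G n ξ c k :=
    (Finset.sum_filter_of_ne fun k _ h => by
      by_contra hc; exact h (G_zero hesc hc)).symm
  have hG2 : ∑ k, (G n ξ c k)^2 = ∑ k ∈ F, (G n ξ c k)^2 :=
    (Finset.sum_filter_of_ne fun k _ h => by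
      by_contra hc; exact h (by rw [G_zero hesc hc]; norm_num)).symm
  rw [hG1, hG2]
  have hexp : ∑ k ∈ F, (G n ξ c k - 1/(2*n))^2
      = (∑ k ∈ F, (G n ξ c k)^2) - (1/n) * (∑ k ∈ F, G n ξ c k)
        + F.card * (1/(4*n^2)) := by
    have hpt : ∀ g : ℝ, (g - 1/(2*n))^2 = g^2 - (1/n)*g + 1/(4*n^2) := by
      intro g; field_simp; ring
    rw [Finset.sum_congr rfl (fun k _ => hpt (G n ξ c k))]
    rw [Finset.sum_add_distrib, Finset.sum_sub_distrib, ← Finset.mul_sum,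
      Finset.sum_const, nsmul_eq_mul]
  rw [hexp, hcard, hqcast]
  field_simp
  ring

lemma sum_ite_val {n : ℕ} (m : Fin n) (c : ℝ) :
    ∑ i : Fin n, (if i.val = m.val then c else 0) = c := by
  have h : ∀ i : Fin n, (if i.val = m.val then c else 0) = if i = m then c else 0 := by
    intro i; simp [Fin.ext_iff]
  rw [Finset.sum_congr rfl fun i _ => h i, Finset.sum_ite_eq' univ m, if_pos (mem_univ m)]

lemma senn_cohort {n : ℕ} (hn : 0 < n) (k : Fin n) :
    ∑ i, senn n i k = 1 / n := by
  have h : ∀ i : Fin (n+1), senn n i k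
      = (if i.val = (0 : Fin (n+1)).val then 1/(2*(n:ℝ)) else 0)
        + (if i.val = (⟨k.val + 1, by omega⟩ : Fin (n+1)).val then 1/(2*(n:ℝ)) else 0) := by
    intro i
    unfold senn
    rw [Fin.val_zero]
    by_cases h0 : i.val = 0
    · rw [if_pos (Or.inl h0), if_pos h0, if_neg (by simp [h0])]
      simp
    · by_cases h1 : i.val = k.val + 1
      · rw [if_pos (Or.inr h1), if_neg h0, if_pos h1]
        simp
      · rw [if_neg (by tauto), if_neg h0, if_neg h1]
        simp
  rw [Finset.sum_congr rfl fun i _ => h i, Finset.sum_add_distrib,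
    sum_ite_val, sum_ite_val]
  have hn' : (n:ℝ) ≠ 0 := Nat.cast_ne_zero.mpr hn.ne'
  rw [← add_div, show (1:ℝ) + 1 = 2 by norm_num]
  rw [mul_comm ((2:ℝ)) ((n:ℝ)), ← div_div, div_right_comm,
    div_self (by norm_num : (2:ℝ) ≠ 0)]

lemma senn_esc {n : ℕ} (hn : 0 < n) : isEscalation n n (senn n) := by
  have hn' : (n:ℝ) ≠ 0 := Nat.cast_ne_zero.mpr hn.ne'
  refine ⟨⟨?_, ?_⟩, ?_, ?_⟩
  · intro i k; unfold senn; split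
    · positivity
    · exact le_refl 0
  · rw [Finset.sum_comm]
    rw [Finset.sum_congr rfl fun k (_ : k ∈ (univ : Finset (Fin n))) => senn_cohort hn k]
    rw [Finset.sum_const, nsmul_eq_mul, Finset.card_univ, Fintype.card_fin]
    field_simp
  · intro i k _ hlt
    unfold senn
    rw [if_neg]; push_neg; omega
  · intro k; exact senn_cohort hn k

lemma NA_senn {n : ℕ} (hn : 0 < n) :
    NA n n (senn n) = fun i j => if i = j then 1/(4*(n:ℝ)) else 0 := by
  have hn' : (n:ℝ) ≠ 0 := Nat.cast_ne_zero.mpr hn.ne'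
  funext i j
  have hrepl : ∀ i : Fin n, repl n n (senn n) i.succ = 1/(2*n) := by
    intro i
    unfold repl senn
    have h : ∀ k : Fin n, (if (i.succ).val = 0 ∨ (i.succ).val = k.val + 1
        then 1/(2*(n:ℝ)) else 0) = if k.val = i.val then 1/(2*(n:ℝ)) else 0 := by
      intro k
      simp only [Fin.val_succ]
      by_cases h1 : k.val = i.val
      · rw [if_pos (Or.inr (by omega)), if_pos h1]
      · rw [if_neg (by omega), if_neg h1]
    rw [Finset.sum_congr rfl fun k _ => h k, sum_ite_val]
  have hprodeq : ∀ k : Fin n, senn n i.succ k * senn n j.succ k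
      = (if k = i then 1/(2*(n:ℝ)) else 0) * (if k = j then 1/(2*(n:ℝ)) else 0) := by
    intro k
    unfold senn
    simp only [Fin.val_succ]
    congr 1
    · by_cases h1 : k = i
      · rw [if_pos (Or.inr (by rw [h1])), if_pos h1]
      · rw [if_neg (by simp [Fin.ext_iff] at h1 ⊢; omega), if_neg h1]
    · by_cases h1 : k = j
      · rw [if_pos (Or.inr (by rw [h1])), if_pos h1]
      · rw [if_neg (by simp [Fin.ext_iff] at h1 ⊢; omega), if_neg h1]
  have hprod : ∑ k, senn n i.succ k * senn n j.succ k
      = if i = j then 1/(4*(n:ℝ)^2) else 0 := by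
    rw [Finset.sum_congr rfl fun k _ => hprodeq k]
    rw [Finset.sum_eq_single i]
    · rw [if_pos rfl]
      by_cases h1 : i = j
      · rw [if_pos h1, if_pos h1]; field_simp; ring
      · rw [if_neg h1, if_neg h1, mul_zero]
    · intro b _ hb; rw [if_neg hb, zero_mul]
    · simp
  unfold NA
  rw [hrepl, hprod]
  by_cases h1 : i = j
  · rw [if_pos h1, if_pos h1, if_pos h1]; field_simp; ring
  · rw [if_neg h1, if_neg h1, if_neg h1]; ring

lemma raySet_bddBelow {m : ℕ} (A : Matrix (Fin m) (Fin m) ℝ) :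
    BddBelow { r : ℝ | ∃ x : Fin m → ℝ, ∑ i, x i ^ 2 = 1 ∧ r = ∑ i, ∑ j, x i * A i j * x j } := by
  refine ⟨-(∑ i, ∑ j, |A i j|), ?_⟩
  rintro r ⟨x, hx, rfl⟩
  have hxb : ∀ i, |x i| ≤ 1 := by
    intro i
    have h1 : x i ^ 2 ≤ 1 := by
      rw [← hx]
      exact Finset.single_le_sum (f := fun i => x i ^ 2) (fun j _ => by positivity) (mem_univ i)
    nlinarith [abs_nonneg (x i), sq_abs (x i)]
  have key : ∀ i j : Fin m, -|A i j| ≤ x i * A i j * x j := by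
    intro i j
    have h1 : |x i * A i j * x j| ≤ |A i j| := by
      rw [abs_mul, abs_mul]
      have hA := abs_nonneg (A i j)
      calc |x i| * |A i j| * |x j| ≤ |A i j| * |x j| :=
            mul_le_mul_of_nonneg_right (mul_le_of_le_one_left hA (hxb i)) (abs_nonneg _)
        _ ≤ |A i j| := mul_le_of_le_one_right hA (hxb j)
    have := neg_abs_le (x i * A i j * x j)
    linarith
  have : ∑ i, ∑ j, -|A i j| ≤ ∑ i, ∑ j, x i * A i j * x j :=
    Finset.sum_le_sum fun i _ => Finset.sum_le_sum fun j _ => key i j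
  simpa using this

lemma lambdaMin_le {m : ℕ} (A : Matrix (Fin m) (Fin m) ℝ) (x : Fin m → ℝ)
    (hx : ∑ i, x i ^ 2 = 1) : lambdaMin A ≤ ∑ i, ∑ j, x i * A i j * x j :=
  csInf_le (raySet_bddBelow A) ⟨x, hx, rfl⟩

lemma lambdaMin_senn {n : ℕ} (hn : 0 < n) :
    lambdaMin (NA n n (senn n)) = 1/(4*(n:ℝ)) := by
  have hray : ∀ x : Fin n → ℝ, (∑ i, x i ^ 2 = 1) →
      ∑ i, ∑ j, x i * NA n n (senn n) i j * x j = 1/(4*(n:ℝ)) := by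
    intro x hx
    rw [NA_senn hn]
    have h1 : ∀ i : Fin n, ∑ j, x i * (if i = j then 1/(4*(n:ℝ)) else 0) * x j
        = x i ^ 2 * (1/(4*(n:ℝ))) := by
      intro i
      rw [Finset.sum_eq_single i]
      · rw [if_pos rfl]; ring
      · intro b _ hb; rw [if_neg (Ne.symm hb)]; ring
      · simp
    rw [Finset.sum_congr rfl fun i _ => h1 i, ← Finset.sum_mul, hx, one_mul]
  have hset : { r : ℝ | ∃ x : Fin n → ℝ, ∑ i, x i ^ 2 = 1
      ∧ r = ∑ i, ∑ j, x i * NA n n (senn n) i j * x j } = {1/(4*(n:ℝ))} := by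
    ext r
    constructor
    · rintro ⟨x, hx, rfl⟩; exact hray x hx
    · rintro rfl
      refine ⟨fun i => if i = ⟨0, hn⟩ then 1 else 0, ?_, ?_⟩
      · rw [Finset.sum_congr rfl (fun i _ => by
          split <;> simp : ∀ i ∈ (univ : Finset (Fin n)),
            (if i = (⟨0, hn⟩ : Fin n) then (1:ℝ) else 0) ^ 2
              = if i = ⟨0, hn⟩ then 1 else 0)]
        rw [Finset.sum_ite_eq' univ, if_pos (mem_univ _)]
      · exact (hray _ (by
          rw [Finset.sum_congr rfl (fun i _ => by
            split <;> simp : ∀ i ∈ (univ : Finset (Fin n)),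
              (if i = (⟨0, hn⟩ : Fin n) then (1:ℝ) else 0) ^ 2
                = if i = ⟨0, hn⟩ then 1 else 0)]
          rw [Finset.sum_ite_eq' univ, if_pos (mem_univ _)])).symm
  unfold lambdaMin
  rw [hset, csInf_singleton]

lemma lambdaMin_upper {n : ℕ} (hn : 0 < n) {ξ : Fin (n+1) → Fin n → ℝ}
    (hesc : isEscalation n n ξ) : lambdaMin (NA n n ξ) ≤ 1/(4*(n:ℝ)) := by
  obtain ⟨x, hx, hval⟩ := rayleigh_test n hn ξ hesc ⟨0, hn⟩
  have h1 := lambdaMin_le (NA n n ξ) x hx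
  rw [hval] at h1
  have hq : (0:ℝ) < (n:ℝ) - ((⟨0, hn⟩ : Fin n) : Fin n).val := by
    simp
    exact_mod_cast hn
  have hs : 0 ≤ ∑ k ∈ Finset.univ.filter (fun k : Fin n => (⟨0, hn⟩ : Fin n) ≤ k),
      (G n ξ ⟨0, hn⟩ k - 1/(2*n))^2 :=
    Finset.sum_nonneg fun k _ => sq_nonneg _
  have hnn : 0 ≤ ((n:ℝ) / ((n:ℝ) - ((⟨0, hn⟩ : Fin n) : Fin n).val)) := by
    apply div_nonneg (Nat.cast_nonneg n) hq.le
  nlinarith [mul_nonneg hnn hs]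

lemma G_of_eq {n : ℕ} (hn : 0 < n) {ξ : Fin (n+1) → Fin n → ℝ}
    (hesc : isEscalation n n ξ)
    (heq : lambdaMin (NA n n ξ) = 1/(4*(n:ℝ))) :
    ∀ c k : Fin n, c ≤ k → G n ξ c k = 1/(2*(n:ℝ)) := by
  intro c k hck
  obtain ⟨x, hx, hval⟩ := rayleigh_test n hn ξ hesc c
  have h1 := lambdaMin_le (NA n n ξ) x hx
  rw [hval, heq] at h1
  have hq : (0:ℝ) < (n:ℝ) - (c.val : ℝ) := by
    have : (c.val : ℝ) < n := by exact_mod_cast c.isLt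
    linarith
  have hpos : 0 < ((n:ℝ) / ((n:ℝ) - c.val)) :=
    div_pos (by exact_mod_cast hn) hq
  have hs : 0 ≤ ∑ k ∈ Finset.univ.filter (fun k : Fin n => c ≤ k),
      (G n ξ c k - 1/(2*n))^2 :=
    Finset.sum_nonneg fun k _ => sq_nonneg _
  have hzero : ∑ k ∈ Finset.univ.filter (fun k : Fin n => c ≤ k),
      (G n ξ c k - 1/(2*n))^2 = 0 := by
    nlinarith [mul_nonneg hpos.le hs]
  have hterm := (Finset.sum_eq_zero_iff_of_nonneg
    (fun k _ => sq_nonneg (G n ξ c k - 1/(2*n)))).mp hzero k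
    (Finset.mem_filter.mpr ⟨mem_univ _, hck⟩)
  have := sq_eq_zero_iff.mp hterm
  linarith [this]

lemma eq_senn {n : ℕ} (hn : 0 < n) {ξ : Fin (n+1) → Fin n → ℝ}
    (hesc : isEscalation n n ξ)
    (hG : ∀ c k : Fin n, c ≤ k → G n ξ c k = 1/(2*(n:ℝ))) : ξ = senn n := by
  have hn' : (n:ℝ) ≠ 0 := Nat.cast_ne_zero.mpr hn.ne'
  funext i k
  by_cases h0 : i.val = 0
  · -- placebo row
    have hcoh := hesc.2.2 k
    rw [Fin.sum_univ_succ] at hcoh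
    have hz : (⟨0, hn⟩ : Fin n) ≤ k := by simp [Fin.le_def]
    have hGz := hG ⟨0, hn⟩ k hz
    have hfull : G n ξ ⟨0, hn⟩ k = ∑ j : Fin n, ξ j.succ k := by
      unfold G
      rw [show Finset.univ.filter (fun i : Fin n => (⟨0, hn⟩ : Fin n) ≤ i) = univ by
        ext j; simp [Fin.le_def]]
    rw [hfull] at hGz
    have hi : i = 0 := Fin.ext h0
    have hhalf : (1:ℝ)/(2*n) + 1/(2*n) = 1/n := by
      rw [← add_div, show (1:ℝ)+1 = 2 by norm_num, mul_comm ((2:ℝ)) ((n:ℝ)),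
        ← div_div, div_right_comm, div_self (by norm_num : (2:ℝ) ≠ 0)]
    have hξ0 : ξ 0 k = 1/(2*(n:ℝ)) := by
      rw [hGz] at hcoh
      linarith
    rw [hi, hξ0]
    unfold senn
    rw [if_pos (Or.inl (by simp))]
  · by_cases hk1 : i.val = k.val + 1
    · -- top dose
      set j : Fin n := ⟨k.val, k.isLt⟩ with hj
      have hij : i = j.succ := Fin.ext (by simp [hj, Fin.val_succ, hk1])
      have hGj := hG j k (by simp [Fin.le_def, hj])
      have hsingle : G n ξ j k = ξ j.succ k := by
        unfold G
        rw [Finset.sum_eq_single j]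
        · intro b hb hbne
          rw [Finset.mem_filter] at hb
          apply esc_zero hesc
          have h1 := hb.2
          rw [Fin.le_def] at h1
          simp only [hj] at h1 ⊢
          rcases Fin.ext_iff.not.mp hbne with _
          have : j.val ≠ b.val := fun hh => hbne (Fin.ext hh.symm)
          simp only [hj] at this
          omega
        · intro hmem
          exact absurd (Finset.mem_filter.mpr ⟨mem_univ _, le_refl _⟩) hmem
      rw [hij, ← hsingle, hGj]
      unfold senn
      rw [if_pos (Or.inr (by simp [hj, Fin.val_succ]))]
    · by_cases hk2 : k.val + 1 < i.val
      · rw [hesc.2.1 i k (by omega) hk2]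
        unfold senn
        rw [if_neg (by push_neg; exact ⟨h0, hk1⟩)]
      · -- middle: 1 ≤ i.val ≤ k.val
        have h1le : 1 ≤ i.val := by omega
        have hile : i.val ≤ k.val := by omega
        have hklt := k.isLt
        have hjlt : i.val - 1 < n := by omega
        set j : Fin n := ⟨i.val - 1, hjlt⟩ with hj
        have hvj : j.val = i.val - 1 := rfl
        have hj'lt : j.val + 1 < n := by rw [hvj]; omega
        set j' : Fin n := ⟨j.val + 1, hj'lt⟩ with hj'
        have hvj' : j'.val = j.val + 1 := rfl
        have hGj := hG j k (by rw [Fin.le_def, hvj]; omega)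
        have hGj' := hG j' k (by rw [Fin.le_def, hvj', hvj]; omega)
        have hsplitG : G n ξ j k = ξ j.succ k + G n ξ j' k := by
          unfold G
          rw [show Finset.univ.filter (fun b : Fin n => j ≤ b)
              = insert j (Finset.univ.filter (fun b : Fin n => j' ≤ b)) by
            ext b
            simp only [Finset.mem_insert, Finset.mem_filter, mem_univ, true_and,
              Fin.le_def, Fin.ext_iff, hvj']
            omega]
          rw [Finset.sum_insert (by
            simp only [Finset.mem_filter, mem_univ, true_and, Fin.le_def, hvj']
            omega)]
        have hξj : ξ j.succ k = 0 := by
          rw [hGj', hGj] at hsplitG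
          linarith
        have hij : i = j.succ := Fin.ext (by rw [Fin.val_succ, hvj]; omega)
        rw [hij, hξj]
        unfold senn
        rw [if_neg (by
          push_neg
          rw [Fin.val_succ, hvj]
          constructor <;> omega)]

/-- Theorem 1 (E-optimality, standard designs): every standard dose-escalation
design has λ_min(N_A(ξ)) ≤ 1/(4n), with equality iff ξ is the Senn design;
consequently, a standard design is E-optimal iff it is the Senn design. -/
theorem stmt2 (n : ℕ) (hn : 2 ≤ n) :
    (∀ ξ : Fin (n+1) → Fin n → ℝ, isEscalation n n ξ →
      lambdaMin (NA n n ξ) ≤ 1 / (4 * n) ∧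
      (lambdaMin (NA n n ξ) = 1 / (4 * n) ↔ ξ = senn n)) ∧
    (∀ ξ : Fin (n+1) → Fin n → ℝ, isEscalation n n ξ →
      ((∀ ξ' : Fin (n+1) → Fin n → ℝ, isEscalation n n ξ' →
          lambdaMin (NA n n ξ') ≤ lambdaMin (NA n n ξ)) ↔ ξ = senn n)) := by
  have hn0 : 0 < n := by omega
  have hsenn := lambdaMin_senn hn0
  have hforward : ∀ ξ : Fin (n+1) → Fin n → ℝ, isEscalation n n ξ →
      lambdaMin (NA n n ξ) = 1 / (4 * (n:ℝ)) → ξ = senn n := fun ξ hξ heq =>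
    eq_senn hn0 hξ (G_of_eq hn0 hξ heq)
  constructor
  · intro ξ hξ
    refine ⟨lambdaMin_upper hn0 hξ, ⟨hforward ξ hξ, ?_⟩⟩
    rintro rfl
    exact hsenn
  · intro ξ hξ
    constructor
    · intro hopt
      apply hforward ξ hξ
      have h1 := lambdaMin_upper hn0 hξ
      have h2 := hopt (senn n) (senn_esc hn0)
      rw [hsenn] at h2
      linarith
    · rintro rfl
      intro ξ' hξ'
      rw [hsenn]
      exact lambdaMin_upper hn0 hξ'
end
end

section
/- For every extended dose-escalation design ξ (t = n+1) with N_A(ξ) invertible, 1_n^T N_A(ξ)^{-1} 1_n ≥ 4n², and every E-optimal extended design attains equality: if ξ satisfies ξ(0,k) = 1/(2(n+1)) for all k = 1,…,n+1 and r_1(ξ) = … = r_n(ξ) = 1/(2n), then 1_n^T N_A(ξ)^{-1} 1_n = 4n². Consequently, every E-optimal extended design minimizes the variance of the least-squares estimator of the average dose effect compared with the placebo, (1/n)∑_{i=1}^n τ_i − τ_0, which is proportional to (1/n²)·1_n^T N_A(ξ)^{-1} 1_n. -/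
noncomputable section

open Matrix Finset

lemma NA_quad (n t : ℕ) (ξ : Fin (n+1) → Fin t → ℝ) (x : Fin n → ℝ) :
    x ⬝ᵥ (NA n t ξ).mulVec x
      = ∑ i, repl n t ξ i.succ * x i ^ 2
        - (t : ℝ) * ∑ k, (∑ i, ξ i.succ k * x i) ^ 2 := by
  have h1 : ∀ k : Fin t, (∑ i, ξ i.succ k * x i) ^ 2
      = ∑ i, ∑ j, x i * (ξ i.succ k * ξ j.succ k) * x j := by
    intro k
    rw [sq, Finset.sum_mul_sum]
    exact Finset.sum_congr rfl fun i _ => Finset.sum_congr rfl fun j _ => by ring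
  have h2 : (t : ℝ) * ∑ k, (∑ i, ξ i.succ k * x i) ^ 2
      = ∑ i, ∑ j, x i * ((t : ℝ) * (∑ k, ξ i.succ k * ξ j.succ k) * x j) := by
    simp only [h1, Finset.mul_sum]
    rw [Finset.sum_comm]
    refine Finset.sum_congr rfl fun i _ => ?_
    rw [Finset.sum_comm]
    refine Finset.sum_congr rfl fun j _ => ?_
    rw [Finset.sum_mul, Finset.mul_sum]
    exact Finset.sum_congr rfl fun k _ => by ring
  have h3 : ∑ i, repl n t ξ i.succ * x i ^ 2
      = ∑ i, ∑ j, x i * ((if i = j then repl n t ξ i.succ else 0) * x j) := by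
    refine Finset.sum_congr rfl fun i _ => ?_
    rw [Finset.sum_eq_single i (fun j _ hj => by simp [Ne.symm hj]) (by simp)]
    simp [sq]; ring
  rw [h2, h3, ← Finset.sum_sub_distrib]
  simp only [dotProduct, mulVec, NA]
  refine Finset.sum_congr rfl fun i _ => ?_
  rw [← Finset.sum_sub_distrib, Finset.mul_sum]
  exact Finset.sum_congr rfl fun j _ => by ring
lemma NA_quad_sq (n t : ℕ) (ht : (t : ℝ) ≠ 0) (ξ : Fin (n+1) → Fin t → ℝ)
    (hσ : ∀ k, ∑ i, ξ i k = 1 / t) (x : Fin n → ℝ) :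
    x ⬝ᵥ (NA n t ξ).mulVec x
      = ∑ k, ∑ i, ξ i k *
          (Fin.cases 0 x i - (t : ℝ) * ∑ j, ξ j k * Fin.cases (0:ℝ) x j) ^ 2 := by
  have key : ∀ k, (∑ i, ξ i k *
        (Fin.cases 0 x i - (t : ℝ) * ∑ j, ξ j k * Fin.cases (0:ℝ) x j) ^ 2)
      = (∑ i : Fin n, ξ i.succ k * x i ^ 2)
        - (t : ℝ) * (∑ i : Fin n, ξ i.succ k * x i) ^ 2 := by
    intro k
    have hy : (∑ j, ξ j k * Fin.cases (0:ℝ) x j) = ∑ i : Fin n, ξ i.succ k * x i := by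
      rw [Fin.sum_univ_succ]; simp
    have hy2 : (∑ j, ξ j k * (Fin.cases (0:ℝ) x j) ^ 2)
        = ∑ i : Fin n, ξ i.succ k * x i ^ 2 := by
      rw [Fin.sum_univ_succ]; simp
    have expand : ∀ i : Fin (n+1),
        ξ i k * (Fin.cases (0:ℝ) x i - (t : ℝ) * ∑ j, ξ j k * Fin.cases (0:ℝ) x j) ^ 2
        = ξ i k * (Fin.cases (0:ℝ) x i) ^ 2
          - 2 * ((t : ℝ) * ∑ j, ξ j k * Fin.cases (0:ℝ) x j) * (ξ i k * Fin.cases (0:ℝ) x i)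
          + ((t : ℝ) * ∑ j, ξ j k * Fin.cases (0:ℝ) x j) ^ 2 * ξ i k := fun i => by ring
    rw [Finset.sum_congr rfl fun i _ => expand i, Finset.sum_add_distrib,
      Finset.sum_sub_distrib, ← Finset.mul_sum, ← Finset.mul_sum, hσ k, hy, hy2]
    field_simp
    ring
  rw [NA_quad, Finset.sum_congr rfl fun k _ => key k, Finset.sum_sub_distrib,
    ← Finset.mul_sum]
  congr 1
  rw [Finset.sum_comm]
  refine Finset.sum_congr rfl fun i _ => ?_
  rw [repl, Finset.sum_mul]
lemma NA_symm (n t : ℕ) (ξ : Fin (n+1) → Fin t → ℝ) : (NA n t ξ).IsHermitian := by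
  ext i j
  simp only [conjTranspose_apply, NA, star_trivial]
  congr 1
  · by_cases h : i = j
    · subst h; simp
    · simp [h, Ne.symm h]
  · congr 1
    exact Finset.sum_congr rfl fun k _ => mul_comm _ _
lemma NA_posSemidef (n t : ℕ) (ht : (t : ℝ) ≠ 0) (ξ : Fin (n+1) → Fin t → ℝ)
    (hnn : ∀ i k, 0 ≤ ξ i k) (hσ : ∀ k, ∑ i, ξ i k = 1 / t) :
    (NA n t ξ).PosSemidef := by
  refine .of_dotProduct_mulVec_nonneg (NA_symm n t ξ) fun x => ?_
  rw [star_trivial, NA_quad_sq n t ht ξ hσ x]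
  exact Finset.sum_nonneg fun k _ => Finset.sum_nonneg fun i _ =>
    mul_nonneg (hnn i k) (sq_nonneg _)
lemma NA_posDef (n t : ℕ) (ht : (t : ℝ) ≠ 0) (ξ : Fin (n+1) → Fin t → ℝ)
    (hnn : ∀ i k, 0 ≤ ξ i k) (hσ : ∀ k, ∑ i, ξ i k = 1 / t)
    (hp : ∀ k, 0 < ξ 0 k) (hd : ∀ i : Fin n, ∃ k, 0 < ξ i.succ k) :
    (NA n t ξ).PosDef := by
  refine .of_dotProduct_mulVec_pos (NA_symm n t ξ) fun x hx => ?_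
  rw [star_trivial]
  rcases lt_or_eq_of_le ((NA_posSemidef n t ht ξ hnn hσ).dotProduct_mulVec_nonneg x) with h | h
  · rwa [star_trivial] at h
  exfalso
  rw [star_trivial, NA_quad_sq n t ht ξ hσ x] at h
  have hz : ∀ k, ∀ i, ξ i k *
      (Fin.cases 0 x i - (t : ℝ) * ∑ j, ξ j k * Fin.cases (0:ℝ) x j) ^ 2 = 0 := by
    intro k i
    have h1 := (Finset.sum_eq_zero_iff_of_nonneg (fun k _ =>
      Finset.sum_nonneg fun i _ => mul_nonneg (hnn i k) (sq_nonneg _))).mp h.symm k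
      (Finset.mem_univ k)
    exact (Finset.sum_eq_zero_iff_of_nonneg (fun i _ =>
      mul_nonneg (hnn i k) (sq_nonneg _))).mp h1 i (Finset.mem_univ i)
  have hmu : ∀ k, (t : ℝ) * ∑ j, ξ j k * Fin.cases (0:ℝ) x j = 0 := by
    intro k
    have := hz k 0
    have h2 : (Fin.cases (0:ℝ) x (0 : Fin (n+1))
        - (t : ℝ) * ∑ j, ξ j k * Fin.cases (0:ℝ) x j) ^ 2 = 0 :=
      (mul_eq_zero.mp this).resolve_left (ne_of_gt (hp k))
    have := pow_eq_zero_iff (two_ne_zero) |>.mp h2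
    simpa using this
  obtain ⟨i0, hi0⟩ := Function.ne_iff.mp hx
  obtain ⟨k0, hk0⟩ := hd i0
  have := hz k0 i0.succ
  have h2 : (Fin.cases (0:ℝ) x i0.succ
      - (t : ℝ) * ∑ j, ξ j k0 * Fin.cases (0:ℝ) x j) ^ 2 = 0 :=
    (mul_eq_zero.mp this).resolve_left (ne_of_gt hk0)
  rw [hmu k0] at h2
  have := pow_eq_zero_iff (two_ne_zero) |>.mp h2
  simp at this
  exact hi0 this
lemma NA_transpose (n t : ℕ) (ξ : Fin (n+1) → Fin t → ℝ) :
    (NA n t ξ)ᵀ = NA n t ξ := by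
  rw [← conjTranspose_eq_transpose_of_trivial]
  exact NA_symm n t ξ

-- sum of inverse entries equals 1 ⬝ᵥ A⁻¹ *ᵥ 1
lemma sum_inv_eq (n : ℕ) (A : Matrix (Fin n) (Fin n) ℝ) :
    ∑ i, ∑ j, A⁻¹ i j = (fun _ => (1:ℝ)) ⬝ᵥ (A⁻¹ *ᵥ (fun _ => (1:ℝ))) := by
  simp [dotProduct, mulVec]
lemma part1 (n : ℕ) (hn : 2 ≤ n) (ξ : Fin (n+1) → Fin (n+1) → ℝ)
    (hesc : isEscalation n (n+1) ξ) (hdet : IsUnit (NA n (n+1) ξ).det) :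
    4 * (n : ℝ) ^ 2 ≤ ∑ i, ∑ j, (NA n (n+1) ξ)⁻¹ i j := by
  have hnR : (2:ℝ) ≤ (n:ℝ) := by exact_mod_cast hn
  have ht : ((n+1 : ℕ) : ℝ) ≠ 0 := by positivity
  set A := NA n (n+1) ξ with hA
  have hnn := hesc.1.1
  have hσ := hesc.2.2
  have hpsd := NA_posSemidef n (n+1) ht ξ hnn hσ
  set o : Fin n → ℝ := fun _ => 1 with ho
  set u : Fin n → ℝ := A⁻¹ *ᵥ o with hu
  have hAu : A *ᵥ u = o := by
    rw [hu, mulVec_mulVec, Matrix.mul_nonsing_inv _ hdet, one_mulVec]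
  set a : ℝ := o ⬝ᵥ (A *ᵥ o) with ha
  set c : ℝ := o ⬝ᵥ u with hc
  have hoo : o ⬝ᵥ o = (n : ℝ) := by simp [ho, dotProduct]
  have hvm : u ᵥ* A = o := by
    rw [hA, ← NA_transpose n (n+1) ξ, vecMul_transpose, ← hA, hAu]
  have huA : ∀ w : Fin n → ℝ, u ⬝ᵥ (A *ᵥ w) = o ⬝ᵥ w := by
    intro w; rw [dotProduct_mulVec, hvm]
  have huAo : u ⬝ᵥ (A *ᵥ o) = (n : ℝ) := by rw [huA, hoo]
  have hoAu : o ⬝ᵥ (A *ᵥ u) = (n : ℝ) := by rw [hAu, hoo]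
  have huAu : u ⬝ᵥ (A *ᵥ u) = c := by
    rw [huA, hc, dotProduct_comm]
  have hquad : ∀ l : ℝ, 0 ≤ a - 2 * l * n + l ^ 2 * c := by
    intro l
    have h0 : 0 ≤ star (o - l • u) ⬝ᵥ (A *ᵥ (o - l • u)) := hpsd.dotProduct_mulVec_nonneg (o - l • u)
    simp only [star_trivial, mulVec_sub, mulVec_smul, dotProduct_sub, sub_dotProduct,
      dotProduct_smul, smul_dotProduct, smul_eq_mul, ← ha, hoAu, huAo, huAu] at h0
    nlinarith [h0]
  -- c > 0
  have hc_pos : 0 < c := by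
    by_contra hcp
    push_neg at hcp
    have hl := hquad ((a + 1) / (2 * n))
    have hn0 : (0:ℝ) < n := by linarith
    have h1 : a - 2 * ((a + 1) / (2 * n)) * n = -1 := by field_simp; ring
    nlinarith [sq_nonneg ((a + 1) / (2 * n)), mul_nonpos_of_nonneg_of_nonpos
      (sq_nonneg ((a + 1) / (2 * n))) hcp]
  -- n^2 ≤ a * c
  have hac : (n:ℝ)^2 ≤ a * c := by
    have hl := hquad ((n : ℝ) / c)
    have h1 : a - 2 * ((n:ℝ) / c) * n + ((n:ℝ) / c) ^ 2 * c = a - (n:ℝ)^2 / c := by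
      field_simp; ring
    rw [h1] at hl
    have h2 : (a - (n:ℝ)^2 / c) * c = a * c - (n:ℝ)^2 := by field_simp
    nlinarith [mul_nonneg hl hc_pos.le, h2]
  -- a ≤ 1/4
  have haval : a = (∑ k, ∑ i : Fin n, ξ i.succ k)
      - ((n+1 : ℕ) : ℝ) * ∑ k, (∑ i : Fin n, ξ i.succ k) ^ 2 := by
    rw [ha, NA_quad]
    congr 1
    · rw [Finset.sum_comm]
      refine Finset.sum_congr rfl fun k _ => ?_
      simp [ho, repl]
    · congr 1
      refine Finset.sum_congr rfl fun k _ => ?_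
      simp [ho]
  have ha_le : a ≤ 1 / 4 := by
    set S := ∑ k, ∑ i : Fin n, ξ i.succ k with hS
    have hcs : S ^ 2 ≤ ((n+1 : ℕ) : ℝ) * ∑ k, (∑ i : Fin n, ξ i.succ k) ^ 2 := by
      have := sq_sum_le_card_mul_sum_sq (s := (Finset.univ : Finset (Fin (n+1))))
        (f := fun k => ∑ i : Fin n, ξ i.succ k)
      simpa using this
    rw [haval]
    nlinarith [hcs, sq_nonneg (S - 1/2)]
  rw [sum_inv_eq]
  have : (fun _ => (1:ℝ)) ⬝ᵥ (A⁻¹ *ᵥ fun _ => (1:ℝ)) = c := rfl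
  rw [this]
  nlinarith [hac, ha_le, hc_pos]
lemma part2 (n : ℕ) (hn : 2 ≤ n) (ξ : Fin (n+1) → Fin (n+1) → ℝ)
    (hesc : isEscalation n (n+1) ξ)
    (h0 : ∀ k : Fin (n+1), ξ 0 k = 1 / (2 * (n + 1)))
    (hr : ∀ i : Fin n, repl n (n+1) ξ i.succ = 1 / (2 * n)) :
    ∑ i, ∑ j, (NA n (n+1) ξ)⁻¹ i j = 4 * (n : ℝ) ^ 2 := by
  have hnR : (2:ℝ) ≤ (n:ℝ) := by exact_mod_cast hn
  have hn0 : (0:ℝ) < n := by linarith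
  have ht : ((n+1 : ℕ) : ℝ) ≠ 0 := by positivity
  have htpos : (0:ℝ) < ((n:ℝ) + 1) := by linarith
  have hnn := hesc.1.1
  have hσ := hesc.2.2
  set A := NA n (n+1) ξ with hA
  -- positive definiteness
  have hpd : A.PosDef := by
    rw [hA]
    refine NA_posDef n (n+1) ht ξ hnn hσ (fun k => ?_) (fun i => ?_)
    · rw [h0 k]; positivity
    · by_contra hcon
      push_neg at hcon
      have : repl n (n+1) ξ i.succ ≤ 0 :=
        Finset.sum_nonpos fun k _ => hcon k
      rw [hr i] at this
      have : (0:ℝ) < 1 / (2 * n) := by positivity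
      linarith
  have hdet : IsUnit A.det := isUnit_iff_ne_zero.mpr hpd.det_pos.ne'
  -- row sums of A
  have hs : ∀ k, (∑ j : Fin n, ξ j.succ k) = 1 / (2 * ((n:ℝ) + 1)) := by
    intro k
    have h1 := hσ k
    rw [Fin.sum_univ_succ, h0 k] at h1
    have h2 : ((n+1 : ℕ) : ℝ) = (n:ℝ) + 1 := by push_cast; ring
    rw [h2] at h1
    have key : 1/((n:ℝ)+1) - 1/(2*((n:ℝ)+1)) = 1/(2*((n:ℝ)+1)) := by
      field_simp
      ring
    linarith [key, h1]
  have hrow : ∀ i : Fin n, ∑ j, A i j = 1 / (4 * n) := by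
    intro i
    rw [hA]
    show (∑ j : Fin n, ((if i = j then repl n (n+1) ξ i.succ else 0)
      - ((n+1 : ℕ) : ℝ) * ∑ k : Fin (n+1), ξ i.succ k * ξ j.succ k)) = 1 / (4 * n)
    rw [Finset.sum_sub_distrib]
    have hd : (∑ j : Fin n, if i = j then repl n (n+1) ξ i.succ else 0)
        = 1 / (2 * n) := by
      simp only [Finset.sum_ite_eq, Finset.mem_univ, if_true]
      exact hr i
    have hq : (∑ j : Fin n, ((n+1 : ℕ) : ℝ) * ∑ k : Fin (n+1), ξ i.succ k * ξ j.succ k)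
        = ((n+1 : ℕ) : ℝ) * (1 / (2 * ((n:ℝ) + 1))) * (1 / (2 * n)) := by
      rw [← Finset.mul_sum, Finset.sum_comm]
      have : ∀ k, (∑ j : Fin n, ξ i.succ k * ξ j.succ k)
          = ξ i.succ k * (1 / (2 * ((n:ℝ) + 1))) := by
        intro k; rw [← Finset.mul_sum, hs k]
      rw [Finset.sum_congr rfl fun k _ => this k, ← Finset.sum_mul]
      have : (∑ k, ξ i.succ k) = 1 / (2 * n) := hr i
      rw [this]; ring
    rw [hd, hq]
    have h2 : ((n+1 : ℕ) : ℝ) = (n:ℝ) + 1 := by push_cast; ring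
    rw [h2]
    field_simp
    ring
  -- A *ᵥ w = 1 where w = const 4n
  set w : Fin n → ℝ := fun _ => 4 * (n:ℝ) with hw
  have hAw : A *ᵥ w = fun _ => (1:ℝ) := by
    funext i
    show (∑ j, A i j * w j) = 1
    have : (∑ j, A i j * w j) = (∑ j, A i j) * (4 * (n:ℝ)) := by
      rw [Finset.sum_mul]
    rw [this, hrow i]
    field_simp
  have hinv : A⁻¹ *ᵥ (fun _ => (1:ℝ)) = w := by
    rw [← hAw, mulVec_mulVec, Matrix.nonsing_inv_mul _ hdet, one_mulVec]
  have : (∑ i, ∑ j, A⁻¹ i j) = ∑ i, (A⁻¹ *ᵥ (fun _ => (1:ℝ))) i := by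
    refine Finset.sum_congr rfl fun i _ => ?_
    simp [mulVec, dotProduct]
  rw [hA] at this ⊢
  rw [this, hinv]
  simp [hw, Finset.sum_const]
  ring

/-- For every extended dose-escalation design (t = n+1) with invertible N_A,
the sum of all entries of N_A(ξ)⁻¹ is at least 4n², and every E-optimal
extended design (ξ(0,k) = 1/(2(n+1)) for all k and r_1 = … = r_n = 1/(2n))
attains equality; hence every E-optimal extended design minimizes the
variance of the least-squares estimator of (1/n)∑ᵢ τᵢ − τ₀, proportional to
(1/n²)·1ₙ^T N_A(ξ)⁻¹ 1ₙ. -/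
theorem stmt9 (n : ℕ) (hn : 2 ≤ n) :
    (∀ ξ : Fin (n+1) → Fin (n+1) → ℝ, isEscalation n (n+1) ξ →
      IsUnit (NA n (n+1) ξ).det →
      4 * (n : ℝ) ^ 2 ≤ ∑ i, ∑ j, (NA n (n+1) ξ)⁻¹ i j) ∧
    (∀ ξ : Fin (n+1) → Fin (n+1) → ℝ, isEscalation n (n+1) ξ →
      (∀ k : Fin (n+1), ξ 0 k = 1 / (2 * (n + 1))) →
      (∀ i : Fin n, repl n (n+1) ξ i.succ = 1 / (2 * n)) →
      ∑ i, ∑ j, (NA n (n+1) ξ)⁻¹ i j = 4 * (n : ℝ) ^ 2) :=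
  ⟨fun ξ h hd => part1 n hn ξ h hd, fun ξ h h0 hr => part2 n hn ξ h h0 hr⟩
end
end

section
/- The Senn design is LV-optimal among standard dose-escalation designs: for every standard dose-escalation design ξ (t = n), every stage k ∈ {1,…,n}, and every vector u with M^{(k)}(ξ) u = c_k, one has c_k^T u ≥ 4n; moreover, for the Senn design ξ_S and every k ∈ {1,…,n} there exists u with M^{(k)}(ξ_S) u = c_k and c_k^T u = 4n. In other words, after each cohort k the Senn design minimizes the variance of the least-squares estimator of τ_k − τ_0 computed from the first k cohorts, simultaneously for all k. -/
noncomputable section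

open Matrix Finset

/-- Index of the parameter vector β = (τ₀,…,τₙ, μ, θ₁,…,θ_t) ∈ ℝ^{n+t+2}. -/
abbrev PIdx (n t : ℕ) := Fin (n+1) ⊕ (Unit ⊕ Fin t)

/-- The regression vector f(i,k) = (e_{i+1}^T, 1, e_k^T)^T. -/
def fvec (n t : ℕ) (i : Fin (n+1)) (k : Fin t) : PIdx n t → ℝ :=
  fun j => match j with
  | Sum.inl a => if a = i then 1 else 0
  | Sum.inr (Sum.inl _) => 1
  | Sum.inr (Sum.inr b) => if b = k then 1 else 0

/-- The moment matrix M(ξ) = ∑_{i,k} ξ(i,k) f(i,k) f(i,k)^T. -/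
def momM (n t : ℕ) (ξ : Fin (n+1) → Fin t → ℝ) : Matrix (PIdx n t) (PIdx n t) ℝ :=
  ∑ i, ∑ k, ξ i k • Matrix.vecMulVec (fvec n t i k) (fvec n t i k)

/-- The stage-k moment matrix M^{(k)}(ξ): only trials in the first k cohorts
(cohorts with cohort number ≤ k) are kept. -/
def momMstage (n t : ℕ) (ξ : Fin (n+1) → Fin t → ℝ) (k : ℕ) :
    Matrix (PIdx n t) (PIdx n t) ℝ :=
  ∑ i, ∑ j ∈ Finset.univ.filter (fun j : Fin t => j.val < k),
    ξ i j • Matrix.vecMulVec (fvec n t i j) (fvec n t i j)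

/-- The vector c_k, with −1 in the coordinate of τ₀, +1 in the coordinate of
τ_k, and 0 elsewhere (so c_k^T β = τ_k − τ₀). -/
def cvec (n t k : ℕ) : PIdx n t → ℝ :=
  fun j => match j with
  | Sum.inl a => if a.val = 0 then -1 else if a.val = k then 1 else 0
  | Sum.inr _ => 0

lemma fvec_dot (n t : ℕ) (i : Fin (n+1)) (j : Fin t) (x : PIdx n t → ℝ) :
    fvec n t i j ⬝ᵥ x = x (Sum.inl i) + x (Sum.inr (Sum.inl ())) + x (Sum.inr (Sum.inr j)) := by
  simp [dotProduct, fvec, Fintype.sum_sum_type, ite_mul, Finset.sum_ite_eq']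
  ring

lemma mulVec_momMstage (n t : ℕ) (ξ : Fin (n+1) → Fin t → ℝ) (k : ℕ) (y : PIdx n t → ℝ)
    (p : PIdx n t) :
    (momMstage n t ξ k).mulVec y p
      = ∑ i, ∑ j ∈ Finset.univ.filter (fun j : Fin t => j.val < k),
          ξ i j * (fvec n t i j ⬝ᵥ y) * fvec n t i j p := by
  simp only [Matrix.mulVec, dotProduct, momMstage, Matrix.sum_apply, Matrix.smul_apply,
    Matrix.vecMulVec_apply, smul_eq_mul, Finset.sum_mul]
  rw [Finset.sum_comm]
  refine Finset.sum_congr rfl fun i _ => ?_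
  rw [Finset.sum_comm]
  refine Finset.sum_congr rfl fun j _ => ?_
  simp only [dotProduct, Finset.sum_mul, Finset.mul_sum]
  exact Finset.sum_congr rfl fun q _ => by ring

lemma dot_mulVec_momMstage (n t : ℕ) (ξ : Fin (n+1) → Fin t → ℝ) (k : ℕ)
    (x y : PIdx n t → ℝ) :
    x ⬝ᵥ (momMstage n t ξ k).mulVec y
      = ∑ i, ∑ j ∈ Finset.univ.filter (fun j : Fin t => j.val < k),
          ξ i j * (fvec n t i j ⬝ᵥ x) * (fvec n t i j ⬝ᵥ y) := by
  simp only [dotProduct, mulVec_momMstage, Finset.mul_sum]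
  rw [Finset.sum_comm]
  refine Finset.sum_congr rfl fun i _ => ?_
  rw [Finset.sum_comm]
  refine Finset.sum_congr rfl fun j _ => ?_
  simp only [dotProduct, Finset.sum_mul, Finset.mul_sum]
  rw [Finset.sum_comm]
  refine Finset.sum_congr rfl fun q _ => ?_
  exact Finset.sum_congr rfl fun r _ => by ring

lemma cvec_dot (n t k : ℕ) (hk : k < n+1) (hk1 : 1 ≤ k) (x : PIdx n t → ℝ) :
    cvec n t k ⬝ᵥ x = x (Sum.inl ⟨k, hk⟩) - x (Sum.inl 0) := by
  have h : ∀ a : Fin (n+1), cvec n t k (Sum.inl a) * x (Sum.inl a)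
      = (if a = ⟨k, hk⟩ then x (Sum.inl a) else 0)
        - (if a = (0 : Fin (n+1)) then x (Sum.inl a) else 0) := by
    intro a
    by_cases h0 : a.val = 0 <;> by_cases hkk : a.val = k <;>
      simp_all [cvec, Fin.ext_iff, -Fin.val_eq_zero_iff] <;> omega
  simp only [dotProduct, Fintype.sum_sum_type, h, Finset.sum_sub_distrib,
    Finset.sum_ite_eq', Finset.mem_univ, if_true]
  simp [cvec]

def vv (n k : ℕ) : PIdx n n → ℝ :=
  fun p => match p with
  | Sum.inl a => if a.val < k then -1 else 1
  | Sum.inr (Sum.inl _) => 0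
  | Sum.inr (Sum.inr j) => if j.val + 1 < k then 1 else 0

lemma part1_s11 (n : ℕ) (hn : 2 ≤ n) (ξ : Fin (n+1) → Fin n → ℝ) (hE : isEscalation n n ξ)
    (k : ℕ) (hk1 : 1 ≤ k) (hkn : k ≤ n) (u : PIdx n n → ℝ)
    (hu : (momMstage n n ξ k).mulVec u = cvec n n k) :
    4 * (n : ℝ) ≤ cvec n n k ⬝ᵥ u := by
  obtain ⟨⟨hpos, -⟩, hesc, hcoh⟩ := hE
  have hn0 : (n : ℝ) ≠ 0 := by positivity -- fix if fails
  set F := Finset.univ.filter (fun j : Fin n => j.val < k) with hF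
  set v := vv n k with hv
  have km1lt : k - 1 < n := by omega
  set km1 : Fin n := ⟨k - 1, km1lt⟩ with hkm1
  have hmem : km1 ∈ F := by simp [hF, hkm1]; omega
  -- B(v,v) = 1/n
  have hBvv : ∑ i, ∑ j ∈ F, ξ i j * (fvec n n i j ⬝ᵥ v) * (fvec n n i j ⬝ᵥ v) = 1 / n := by
    have h1 : ∀ i : Fin (n+1),
        ∑ j ∈ F, ξ i j * (fvec n n i j ⬝ᵥ v) * (fvec n n i j ⬝ᵥ v) = ξ i km1 := by
      intro i
      rw [Finset.sum_eq_single_of_mem km1 hmem]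
      · have hd : fvec n n i km1 ⬝ᵥ v = (if i.val < k then (-1:ℝ) else 1) := by
          rw [fvec_dot]
          simp only [hv, vv]
          have : ¬ (km1.val + 1 < k) := by simp [hkm1]; omega
          rw [if_neg this]; ring
        rw [hd]
        by_cases hik : i.val < k <;> simp [hik] <;> ring
      · intro j hjF hne
        have hjk : j.val < k := by simpa [hF] using hjF
        have hj1 : j.val + 1 < k := by
          rcases Nat.lt_or_ge (j.val + 1) k with h | h
          · exact h
          · exfalso; apply hne; apply Fin.ext; simp [hkm1]; omega
        by_cases hij : i.val ≤ j.val + 1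
        · have : fvec n n i j ⬝ᵥ v = 0 := by
            rw [fvec_dot]
            simp only [hv, vv]
            rw [if_pos hj1, if_pos (by omega : i.val < k)]
            ring
          rw [this]; ring
        · rw [hesc i j (by omega) (by omega)]; ring
    rw [Finset.sum_congr rfl fun i _ => h1 i]
    exact hcoh km1
  -- B(u,v) = 2
  have hkn1 : k < n + 1 := by omega
  have hcv : cvec n n k ⬝ᵥ v = 2 := by
    rw [cvec_dot n n k hkn1 hk1]
    have h1 : ¬ (((⟨k, hkn1⟩ : Fin (n+1)) : ℕ) < k) := by simp
    have h2 : (((0 : Fin (n+1)) : ℕ)) < k := by simp; omega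
    simp only [hv, vv, if_neg h1, if_pos h2]
    ring
  have hBuv : ∑ i, ∑ j ∈ F, ξ i j * (fvec n n i j ⬝ᵥ u) * (fvec n n i j ⬝ᵥ v) = 2 := by
    have : ∑ i, ∑ j ∈ F, ξ i j * (fvec n n i j ⬝ᵥ u) * (fvec n n i j ⬝ᵥ v)
        = v ⬝ᵥ (momMstage n n ξ k).mulVec u := by
      rw [dot_mulVec_momMstage]
      exact Finset.sum_congr rfl fun i _ => Finset.sum_congr rfl fun j _ => by ring
    rw [this, hu, dotProduct_comm, hcv]
  have hBuu : ∑ i, ∑ j ∈ F, ξ i j * (fvec n n i j ⬝ᵥ u) * (fvec n n i j ⬝ᵥ u)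
      = cvec n n k ⬝ᵥ u := by
    rw [← dot_mulVec_momMstage, hu, dotProduct_comm]
  -- quadratic form nonneg
  have key : (0:ℝ) ≤ ∑ i, ∑ j ∈ F,
      ξ i j * ((fvec n n i j ⬝ᵥ u) - (2*n) * (fvec n n i j ⬝ᵥ v))^2 :=
    Finset.sum_nonneg fun i _ => Finset.sum_nonneg fun j _ =>
      mul_nonneg (hpos i j) (sq_nonneg _)
  have expand : ∑ i, ∑ j ∈ F,
      ξ i j * ((fvec n n i j ⬝ᵥ u) - (2*n) * (fvec n n i j ⬝ᵥ v))^2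
      = (∑ i, ∑ j ∈ F, ξ i j * (fvec n n i j ⬝ᵥ u) * (fvec n n i j ⬝ᵥ u))
        - (2*(2*n)) * (∑ i, ∑ j ∈ F, ξ i j * (fvec n n i j ⬝ᵥ u) * (fvec n n i j ⬝ᵥ v))
        + (2*n)^2 * (∑ i, ∑ j ∈ F, ξ i j * (fvec n n i j ⬝ᵥ v) * (fvec n n i j ⬝ᵥ v)) := by
    simp only [Finset.mul_sum, ← Finset.sum_sub_distrib, ← Finset.sum_add_distrib]
    exact Finset.sum_congr rfl fun i _ => Finset.sum_congr rfl fun j _ => by ring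
  rw [expand, hBvv, hBuv, hBuu] at key
  have hsq : ((2*(n:ℝ))^2) * (1 / n) = 4 * n := by field_simp; ring
  linarith [key, hsq.symm]

def uu (n k : ℕ) : PIdx n n → ℝ :=
  fun p => match p with
  | Sum.inl a => if a.val = k then 3*(n:ℝ) else if a.val < k then -(n:ℝ) else 0
  | Sum.inr (Sum.inl _) => 0
  | Sum.inr (Sum.inr j) => if j.val + 1 = k then -(n:ℝ) else if j.val + 1 < k then (n:ℝ) else 0

lemma part2_s11 (n : ℕ) (hn : 2 ≤ n) (k : ℕ) (hk1 : 1 ≤ k) (hkn : k ≤ n) :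
    (momMstage n n (senn n) k).mulVec (uu n k) = cvec n n k ∧
      cvec n n k ⬝ᵥ uu n k = 4 * (n : ℝ) := by
  have hn0 : (n : ℝ) ≠ 0 := by positivity
  have hkn1 : k < n + 1 := by omega
  have km1lt : k - 1 < n := by omega
  have ha : ∀ a : Fin (n+1), uu n k (Sum.inl a)
      = (if a.val = k then 3*(n:ℝ) else if a.val < k then -(n:ℝ) else 0) := fun _ => rfl
  have hg : ∀ b : Fin n, uu n k (Sum.inr (Sum.inr b))
      = (if b.val + 1 = k then -(n:ℝ) else if b.val + 1 < k then (n:ℝ) else 0) := fun _ => rfl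
  have hmu : uu n k (Sum.inr (Sum.inl ())) = 0 := rfl
  have h0 : uu n k (Sum.inl 0) = -(n:ℝ) := by
    rw [ha 0, if_neg (by simp; omega), if_pos (by simp; omega)]
  have hK : uu n k (Sum.inl ⟨k, hkn1⟩) = 3*(n:ℝ) := by
    rw [ha ⟨k, hkn1⟩, if_pos rfl]
  constructor
  · funext p
    rw [mulVec_momMstage, Finset.sum_comm]
    have hmem : (⟨k-1, km1lt⟩ : Fin n) ∈ Finset.univ.filter (fun j : Fin n => j.val < k) := by
      simp; omega
    have hinner : ∀ j ∈ Finset.univ.filter (fun j : Fin n => j.val < k),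
        ∑ i, senn n i j * (fvec n n i j ⬝ᵥ uu n k) * fvec n n i j p
          = if j = (⟨k-1, km1lt⟩ : Fin n) then
              fvec n n ⟨k, hkn1⟩ ⟨k-1, km1lt⟩ p - fvec n n 0 ⟨k-1, km1lt⟩ p else 0 := by
      intro j hjF
      have hjk : j.val < k := by simpa using hjF
      have hj1n : j.val + 1 < n + 1 := by omega
      have hsplit : ∀ i : Fin (n+1),
          senn n i j * (fvec n n i j ⬝ᵥ uu n k) * fvec n n i j p
            = (if i = (0 : Fin (n+1)) then
                (1/(2*(n:ℝ))) * (fvec n n 0 j ⬝ᵥ uu n k) * fvec n n 0 j p else 0)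
              + (if i = (⟨j.val+1, hj1n⟩ : Fin (n+1)) then
                (1/(2*(n:ℝ))) * (fvec n n ⟨j.val+1, hj1n⟩ j ⬝ᵥ uu n k)
                  * fvec n n ⟨j.val+1, hj1n⟩ j p else 0) := by
        intro i
        by_cases hi0 : i = (0 : Fin (n+1))
        · subst hi0
          have hne : (0 : Fin (n+1)) ≠ (⟨j.val+1, hj1n⟩ : Fin (n+1)) := by
            simp [Fin.ext_iff]
          rw [if_pos rfl, if_neg hne]
          simp [senn]
        · by_cases hij : i = (⟨j.val+1, hj1n⟩ : Fin (n+1))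
          · subst hij
            rw [if_neg hi0, if_pos rfl]
            have : senn n (⟨j.val+1, hj1n⟩ : Fin (n+1)) j = 1/(2*(n:ℝ)) := by
              simp [senn]
            rw [this]; ring
          · rw [if_neg hi0, if_neg hij]
            have : senn n i j = 0 := by
              have h0' : i.val ≠ 0 := fun h => hi0 (Fin.ext (by simpa using h))
              have hj' : i.val ≠ j.val + 1 := fun h => hij (Fin.ext (by simpa using h))
              simp [senn, h0', hj']
            rw [this]; ring
      rw [Finset.sum_congr rfl fun i _ => hsplit i, Finset.sum_add_distrib,
        Finset.sum_ite_eq', Finset.sum_ite_eq']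
      simp only [Finset.mem_univ, if_true]
      have hS : fvec n n 0 j ⬝ᵥ uu n k = if j.val + 1 = k then -2*(n:ℝ) else 0 := by
        rw [fvec_dot, h0, hmu, hg j]
        by_cases hjk1 : j.val + 1 = k
        · simp only [if_pos hjk1]; ring
        · simp only [if_neg hjk1, if_pos (show j.val + 1 < k by omega)]; ring
      have hR : fvec n n (⟨j.val+1, hj1n⟩ : Fin (n+1)) j ⬝ᵥ uu n k
          = if j.val + 1 = k then 2*(n:ℝ) else 0 := by
        rw [fvec_dot, ha ⟨j.val+1, hj1n⟩, hmu, hg j]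
        have hv : ((⟨j.val+1, hj1n⟩ : Fin (n+1)) : ℕ) = j.val + 1 := rfl
        rw [hv]
        by_cases hjk1 : j.val + 1 = k
        · simp only [if_pos hjk1]; ring
        · simp only [if_neg hjk1, if_pos (show j.val + 1 < k by omega)]; ring
      by_cases hj : j = (⟨k-1, km1lt⟩ : Fin n)
      · have hke : j.val + 1 = k := by
          have := congrArg Fin.val hj
          simp at this; omega
        have hj1e : (⟨j.val+1, hj1n⟩ : Fin (n+1)) = ⟨k, hkn1⟩ := Fin.ext (by simpa using hke)
        rw [if_pos hj, hS, hR, if_pos hke, if_pos hke, hj1e, hj]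
        field_simp
        ring
      · have hke : j.val + 1 ≠ k := by
          intro h; exact hj (Fin.ext (by simp; omega))
        rw [if_neg hj, hS, hR, if_neg hke, if_neg hke]; ring
    rw [Finset.sum_congr rfl hinner, Finset.sum_ite_eq' _ (⟨k-1, km1lt⟩ : Fin n), if_pos hmem]
    rcases p with a | q | b
    · show (if a = ⟨k, hkn1⟩ then (1:ℝ) else 0) - (if a = 0 then (1:ℝ) else 0)
        = cvec n n k (Sum.inl a)
      by_cases h0a : a.val = 0
      · have ha0 : a = 0 := Fin.ext (by simpa using h0a)
        have hne : a ≠ (⟨k, hkn1⟩ : Fin (n+1)) := by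
          rw [ha0]; intro h
          have := congrArg Fin.val h; simp at this; omega
        rw [if_neg hne, if_pos ha0]
        simp [cvec, h0a]
      · by_cases hka : a.val = k
        · have hak : a = (⟨k, hkn1⟩ : Fin (n+1)) := Fin.ext (by simpa using hka)
          have hne : a ≠ 0 := fun h => h0a (by simp [h])
          rw [if_pos hak, if_neg hne]
          simp [cvec, h0a, hka, show ¬ (k = 0) by omega]
        · have hne1 : a ≠ (⟨k, hkn1⟩ : Fin (n+1)) := fun h => hka (by rw [h])
          have hne2 : a ≠ 0 := fun h => h0a (by simp [h])
          rw [if_neg hne1, if_neg hne2]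
          simp [cvec, h0a, hka]
    · show (1:ℝ) - 1 = cvec n n k (Sum.inr (Sum.inl q))
      simp [cvec]
    · show (if b = (⟨k-1, km1lt⟩ : Fin n) then (1:ℝ) else 0)
        - (if b = (⟨k-1, km1lt⟩ : Fin n) then (1:ℝ) else 0) = cvec n n k (Sum.inr (Sum.inr b))
      simp [cvec]
  · rw [cvec_dot n n k hkn1 hk1, hK, h0]; ring

/-- Theorem 3 (LV-optimality of the Senn design, t = n): for every standard
dose-escalation design ξ, every stage k ∈ {1,…,n} and every u with
M^{(k)}(ξ)u = c_k one has c_k^T u ≥ 4n, and for the Senn design the value 4n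
is attained at every stage; i.e., the Senn design simultaneously minimizes
the variance of the least-squares estimator of τ_k − τ₀ computed from the
first k cohorts, for all k. -/
theorem stmt11 (n : ℕ) (hn : 2 ≤ n) :
    (∀ ξ : Fin (n+1) → Fin n → ℝ, isEscalation n n ξ →
      ∀ k : ℕ, 1 ≤ k → k ≤ n →
        ∀ u : PIdx n n → ℝ, (momMstage n n ξ k).mulVec u = cvec n n k →
          4 * (n : ℝ) ≤ cvec n n k ⬝ᵥ u) ∧
    (∀ k : ℕ, 1 ≤ k → k ≤ n →
      ∃ u : PIdx n n → ℝ, (momMstage n n (senn n) k).mulVec u = cvec n n k ∧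
        cvec n n k ⬝ᵥ u = 4 * (n : ℝ)) := by
  refine ⟨fun ξ hE k hk1 hkn u hu => part1_s11 n hn ξ hE k hk1 hkn u hu,
    fun k hk1 hkn => ⟨uu n k, (part2_s11 n hn k hk1 hkn).1, (part2_s11 n hn k hk1 hkn).2⟩⟩
end
end
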